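/- (Proposition 1: unbiasedness of the inverse-probability-weighted penalized moment function.) Let (Ω, 𝔽, P) be a probability space, τ ∈ (0,1), σ₀ > 0 a constant, λ ≥ 0, θ₀ ∈ ℝ^p, and Z ∈ ℝ^p a fixed vector. Let X : Ω → ℝ^p be a random vector with E‖X‖ < ∞, Y : Ω → ℝ a random variable, W : Ω → E a random element of a measurable space, S : Ω → {0,1} a random variable, π : Ω → ℝ a σ(W, X)-measurable random variable with π ≥ σ₀ almost surely, and α : Ω → ℝ a random variable. Assume: (i) E[S | σ(W, X)] = π almost surely; (ii) Y is σ(W, X)-measurable; (iii) P(Y ≤ X'θ₀ | X) = τ almost surely; (iv) P(α ≤ 0) = τ. Then E[(S/π)·X·ψ_τ(Y − X'θ₀) − λ·Z·ψ_τ(α)] = 0 (the zero vector in ℝ^p). -/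

import Mathlib

open MeasureTheory RealInnerProductSpace

/-- The quantile influence function `ψ_τ(u) = τ - 1{u ≤ 0}`. -/
noncomputable def psi (τ u : ℝ) : ℝ := τ - if u ≤ 0 then 1 else 0

/-- Proposition 1: unbiasedness of the inverse-probability-weighted penalized moment
function.  Under (i) `E[S | σ(W,X)] = π`, (ii) `Y` is `σ(W,X)`-measurable, (iii) `X'θ₀` is
the conditional `τ`-quantile of `Y` given `X`, and (iv) `P(α ≤ 0) = τ`, one has
`E[(S/π) X ψ_τ(Y - X'θ₀) - λ Z ψ_τ(α)] = 0`. -/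
theorem ipw_moment_unbiased
    {Ω E : Type*} [MeasurableSpace Ω] {mE : MeasurableSpace E}
    (P : Measure Ω) [IsProbabilityMeasure P]
    (τ σ₀ lam : ℝ) (hτ : τ ∈ Set.Ioo (0 : ℝ) 1) (hσ₀ : 0 < σ₀) (hlam : 0 ≤ lam)
    {p : ℕ} (θ₀ Z : EuclideanSpace ℝ (Fin p))
    (X : Ω → EuclideanSpace ℝ (Fin p)) (hXmeas : Measurable X)
    (hXint : Integrable (fun ω => ‖X ω‖) P)
    (Y : Ω → ℝ) (hYmeas : Measurable Y)
    (W : Ω → E) (hWmeas : Measurable W)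
    (S : Ω → ℝ) (hSmeas : Measurable S) (hS01 : ∀ ω, S ω = 0 ∨ S ω = 1)
    (π : Ω → ℝ)
    (hπmeas : Measurable[MeasurableSpace.comap W mE ⊔ MeasurableSpace.comap X inferInstance] π)
    (hπ : ∀ᵐ ω ∂P, σ₀ ≤ π ω)
    (α : Ω → ℝ) (hαmeas : Measurable α)
    (hi : P[S | MeasurableSpace.comap W mE ⊔ MeasurableSpace.comap X inferInstance] =ᵐ[P] π)
    (hii : Measurable[MeasurableSpace.comap W mE ⊔ MeasurableSpace.comap X inferInstance] Y)
    (hiii : P[(fun ω => if Y ω ≤ ⟪X ω, θ₀⟫ then (1 : ℝ) else 0) |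
        MeasurableSpace.comap X inferInstance] =ᵐ[P] fun _ => τ)
    (hiv : P {ω | α ω ≤ 0} = ENNReal.ofReal τ) :
    ∫ ω, (((S ω / π ω) * psi τ (Y ω - ⟪X ω, θ₀⟫)) • X ω
        - (lam * psi τ (α ω)) • Z) ∂P = 0 := by
  have hM : MeasurableSpace.comap X (inferInstance : MeasurableSpace (EuclideanSpace ℝ (Fin p)))
      ≤ ‹MeasurableSpace Ω› := hXmeas.comap_le
  have hG : (MeasurableSpace.comap W mE ⊔ MeasurableSpace.comap X inferInstance)
      ≤ ‹MeasurableSpace Ω› := sup_le hWmeas.comap_le hM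
  have hMG : (MeasurableSpace.comap X
      (inferInstance : MeasurableSpace (EuclideanSpace ℝ (Fin p))))
      ≤ (MeasurableSpace.comap W mE ⊔ MeasurableSpace.comap X inferInstance) := le_sup_right
  haveI : SigmaFinite (P.trim hG) := (isFiniteMeasure_trim hG).toSigmaFinite
  haveI : SigmaFinite (P.trim hM) := (isFiniteMeasure_trim hM).toSigmaFinite
  -- basic measurability
  have hXM : Measurable[MeasurableSpace.comap X inferInstance] X := Measurable.of_comap_le le_rfl
  have hXiM : ∀ i, Measurable[MeasurableSpace.comap X inferInstance] (fun ω => X ω i) := fun i =>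
    (measurable_pi_apply i).comp ((WithLp.measurable_ofLp 2 _).comp hXM)
  have hinnM : Measurable[MeasurableSpace.comap X inferInstance] (fun ω => ⟪X ω, θ₀⟫) :=
    hXM.inner measurable_const
  have mpsi : Measurable (psi τ) := by
    unfold psi
    exact measurable_const.sub
      (Measurable.ite (measurableSet_le measurable_id measurable_const)
        measurable_const measurable_const)
  have hψG : Measurable[MeasurableSpace.comap W mE ⊔ MeasurableSpace.comap X inferInstance]
      (fun ω => psi τ (Y ω - ⟪X ω, θ₀⟫)) :=
    mpsi.comp (hii.sub (hinnM.mono hMG le_rfl))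
  have hψmeas : Measurable (fun ω => psi τ (Y ω - ⟪X ω, θ₀⟫)) := hψG.mono hG le_rfl
  -- bounds
  have hψb : ∀ u, |psi τ u| ≤ 1 := by
    intro u
    unfold psi
    rcases hτ with ⟨h0, h1⟩
    split_ifs <;> rw [abs_le] <;> constructor <;> linarith
  have hSb : ∀ ω, |S ω| ≤ 1 := by
    intro ω; rcases hS01 ω with h | h <;> simp [h]
  have hπpos : ∀ᵐ ω ∂P, 0 < π ω := hπ.mono fun ω h => lt_of_lt_of_le hσ₀ h
  -- the two integrands are integrable
  have hInt1 : Integrable (fun ω => ((S ω / π ω) * psi τ (Y ω - ⟪X ω, θ₀⟫)) • X ω) P := by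
    refine Integrable.mono' (hXint.const_mul (1 / σ₀)) ?_ ?_
    · exact (((hSmeas.div (hπmeas.mono hG le_rfl)).mul hψmeas).smul hXmeas).aestronglyMeasurable
    · filter_upwards [hπ] with ω hωπ
      have hπω : 0 < π ω := lt_of_lt_of_le hσ₀ hωπ
      have h1 : |S ω / π ω| ≤ 1 / σ₀ := by
        rw [abs_div]
        apply div_le_div₀ (by norm_num) (hSb ω) hσ₀
        rwa [abs_of_pos hπω]
      calc ‖((S ω / π ω) * psi τ (Y ω - ⟪X ω, θ₀⟫)) • X ω‖
          = |S ω / π ω| * |psi τ (Y ω - ⟪X ω, θ₀⟫)| * ‖X ω‖ := by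
            rw [norm_smul, Real.norm_eq_abs, abs_mul]
        _ ≤ (1 / σ₀) * 1 * ‖X ω‖ := by
            apply mul_le_mul_of_nonneg_right _ (norm_nonneg _)
            exact mul_le_mul h1 (hψb _) (abs_nonneg _) (by positivity)
        _ = 1 / σ₀ * ‖X ω‖ := by ring
  have hψαint : Integrable (fun ω => psi τ (α ω)) P := by
    refine Integrable.mono' (integrable_const 1) ((mpsi.comp hαmeas).aestronglyMeasurable) ?_
    exact Filter.Eventually.of_forall fun ω => hψb _
  have hInt2 : Integrable (fun ω => (lam * psi τ (α ω)) • Z) P :=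
    ((hψαint.const_mul lam).smul_const Z)
  rw [integral_sub hInt1 hInt2]
  -- second integral is zero
  have h2 : ∫ ω, (lam * psi τ (α ω)) • Z ∂P = 0 := by
    rw [integral_smul_const, integral_const_mul]
    have hind : Integrable (fun ω => if α ω ≤ 0 then (1:ℝ) else 0) P := by
      refine Integrable.mono' (integrable_const 1) ?_ ?_
      · exact (Measurable.ite (measurableSet_le hαmeas measurable_const)
          measurable_const measurable_const).aestronglyMeasurable
      · refine Filter.Eventually.of_forall fun ω => ?_
        split_ifs <;> simp
    have heq : (fun ω => if α ω ≤ 0 then (1:ℝ) else 0)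
        = Set.indicator {ω | α ω ≤ 0} (fun _ => (1:ℝ)) := by
      funext ω; by_cases h : α ω ≤ 0 <;> simp [Set.indicator, h]
    have : ∫ ω, psi τ (α ω) ∂P = 0 := by
      unfold psi
      rw [integral_sub (integrable_const τ) hind, integral_const, heq,
        integral_indicator_const _ (measurableSet_le hαmeas measurable_const), measureReal_def P {ω | α ω ≤ 0}, hiv,
        ENNReal.toReal_ofReal hτ.1.le]
      simp
    rw [this, mul_zero, zero_smul]
  rw [h2, sub_zero]
  -- first integral is zero, coordinatewise
  have key : ∀ i : Fin p,
      ∫ ω, ((S ω / π ω) * psi τ (Y ω - ⟪X ω, θ₀⟫)) * X ω i ∂P = 0 := by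
    intro i
    set ψ : Ω → ℝ := fun ω => psi τ (Y ω - ⟪X ω, θ₀⟫) with hψdef
    set g : Ω → ℝ := fun ω => ψ ω * X ω i / π ω with hgdef
    have hgG : StronglyMeasurable[MeasurableSpace.comap W mE ⊔
        MeasurableSpace.comap X inferInstance] g :=
      ((hψG.mul ((hXiM i).mono hMG le_rfl)).div hπmeas).stronglyMeasurable
    have hgmeas : Measurable g := (hgG.measurable).mono hG le_rfl
    have hXiabs : ∀ ω, |X ω i| ≤ ‖X ω‖ := by
      intro ω
      calc |X ω i| = Real.sqrt (|X ω i| ^ 2) := by rw [Real.sqrt_sq_eq_abs, abs_abs]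
        _ ≤ ‖X ω‖ := by
            rw [EuclideanSpace.norm_eq (X ω)]
            apply Real.sqrt_le_sqrt
            exact Finset.single_le_sum (f := fun j => |X ω j| ^ 2)
              (fun j _ => by positivity) (Finset.mem_univ i)
    have hgbound : ∀ᵐ ω ∂P, ‖g ω‖ ≤ 1 / σ₀ * ‖X ω‖ := by
      filter_upwards [hπ] with ω hωπ
      have hπω : 0 < π ω := lt_of_lt_of_le hσ₀ hωπ
      rw [hgdef]
      simp only [Real.norm_eq_abs, abs_div, abs_mul]
      rw [div_le_iff₀ (by rwa [abs_of_pos hπω])]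
      calc |ψ ω| * |X ω i| ≤ 1 * ‖X ω‖ :=
            mul_le_mul (hψb _) (hXiabs ω) (abs_nonneg _) (by norm_num)
        _ = ‖X ω‖ := one_mul _
        _ ≤ 1 / σ₀ * ‖X ω‖ * σ₀ := by
            rw [mul_comm (1/σ₀) _, mul_assoc, one_div, inv_mul_cancel₀ hσ₀.ne', mul_one]
        _ ≤ 1 / σ₀ * ‖X ω‖ * |π ω| := by
            apply mul_le_mul_of_nonneg_left _ (by positivity)
            rwa [abs_of_pos hπω]
    have hgint : Integrable g P :=
      Integrable.mono' (hXint.const_mul (1 / σ₀)) hgmeas.aestronglyMeasurable hgbound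
    have hgSint : Integrable (g * S) P := by
      refine Integrable.mono' (hXint.const_mul (1 / σ₀))
        ((hgmeas.mul hSmeas).aestronglyMeasurable) ?_
      filter_upwards [hgbound] with ω hb
      calc ‖(g * S) ω‖ = ‖g ω‖ * |S ω| := by
            simp [Real.norm_eq_abs, abs_mul]
        _ ≤ (1 / σ₀ * ‖X ω‖) * 1 :=
            mul_le_mul hb (hSb ω) (abs_nonneg _) (by positivity)
        _ = 1 / σ₀ * ‖X ω‖ := mul_one _
    have hSint : Integrable S P := by
      refine Integrable.mono' (integrable_const 1) hSmeas.aestronglyMeasurable ?_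
      exact Filter.Eventually.of_forall fun ω => hSb ω
    -- the integrand equals g * S
    have heq1 : (fun ω => ((S ω / π ω) * ψ ω) * X ω i) =ᵐ[P] g * S := by
      filter_upwards [hπpos] with ω hπω
      simp only [hgdef, Pi.mul_apply]
      field_simp
    rw [integral_congr_ae heq1]
    -- pull out g from conditional expectation given G
    have hpull : P[g * S | MeasurableSpace.comap W mE ⊔ MeasurableSpace.comap X inferInstance]
        =ᵐ[P] g * P[S | MeasurableSpace.comap W mE ⊔ MeasurableSpace.comap X inferInstance] :=
      condExp_mul_of_stronglyMeasurable_left hgG hgSint hSint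
    have step1 : ∫ ω, (g * S) ω ∂P = ∫ ω, g ω * π ω ∂P := by
      rw [← integral_condExp hG (f := g * S)]
      refine integral_congr_ae (hpull.trans ?_)
      filter_upwards [hi] with ω h
      simp [h]
    rw [step1]
    -- g * π = ψ * Xi a.e.
    have heq2 : (fun ω => g ω * π ω) =ᵐ[P] fun ω => X ω i * ψ ω := by
      filter_upwards [hπpos] with ω hπω
      simp only [hgdef]
      field_simp
    rw [integral_congr_ae heq2]
    -- conditional expectation of ψ given M is zero
    have hψint : Integrable ψ P := by
      refine Integrable.mono' (integrable_const 1) hψmeas.aestronglyMeasurable ?_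
      exact Filter.Eventually.of_forall fun ω => hψb _
    have hindint : Integrable (fun ω => if Y ω ≤ ⟪X ω, θ₀⟫ then (1:ℝ) else 0) P := by
      refine Integrable.mono' (integrable_const 1) ?_ ?_
      · exact (Measurable.ite (measurableSet_le hYmeas (hinnM.mono hM le_rfl))
          measurable_const measurable_const).aestronglyMeasurable
      · refine Filter.Eventually.of_forall fun ω => ?_
        split_ifs <;> simp
    have hcondψ : P[ψ | MeasurableSpace.comap X inferInstance] =ᵐ[P] 0 := by
      have hψeq : ψ = (fun _ => τ) - fun ω => if Y ω ≤ ⟪X ω, θ₀⟫ then (1:ℝ) else 0 := by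
        funext ω
        simp only [hψdef, psi, Pi.sub_apply, sub_nonpos]
      rw [hψeq]
      calc P[(fun _ => τ) - (fun ω => if Y ω ≤ ⟪X ω, θ₀⟫ then (1:ℝ) else 0) |
            MeasurableSpace.comap X inferInstance]
          =ᵐ[P] P[(fun _ => τ) | MeasurableSpace.comap X inferInstance]
            - P[(fun ω => if Y ω ≤ ⟪X ω, θ₀⟫ then (1:ℝ) else 0) |
                MeasurableSpace.comap X inferInstance] :=
            condExp_sub (integrable_const τ) hindint _
        _ =ᵐ[P] (fun _ => τ) - fun _ => τ := by
            filter_upwards [hiii] with ω h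
            simp only [Pi.sub_apply, condExp_const hM, h]
        _ =ᵐ[P] 0 := by simp
    have hXiψint : Integrable ((fun ω => X ω i) * ψ) P := by
      refine Integrable.mono'
        hXint ((((hXiM i).mono hM le_rfl).mul hψmeas).aestronglyMeasurable) ?_
      refine Filter.Eventually.of_forall fun ω => ?_
      calc ‖((fun ω => X ω i) * ψ) ω‖ = |X ω i| * |ψ ω| := by
            simp [Real.norm_eq_abs, abs_mul]
        _ ≤ ‖X ω‖ * 1 := mul_le_mul (hXiabs ω) (hψb _) (abs_nonneg _) (norm_nonneg _)
        _ = ‖X ω‖ := mul_one _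
    have hpull2 : P[(fun ω => X ω i) * ψ | MeasurableSpace.comap X inferInstance]
        =ᵐ[P] (fun ω => X ω i) * P[ψ | MeasurableSpace.comap X inferInstance] :=
      condExp_mul_of_stronglyMeasurable_left ((hXiM i).stronglyMeasurable) hXiψint hψint
    calc ∫ ω, X ω i * ψ ω ∂P
        = ∫ ω, (P[(fun ω => X ω i) * ψ | MeasurableSpace.comap X inferInstance]) ω ∂P :=
          (integral_condExp hM (f := (fun ω => X ω i) * ψ)).symm
      _ = ∫ ω, (0:ℝ) ∂P := by
          refine integral_congr_ae (hpull2.trans ?_)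
          filter_upwards [hcondψ] with ω h
          simp only [Pi.mul_apply, h, Pi.zero_apply, mul_zero]
      _ = 0 := by simp
  -- assemble the vector statement
  ext i
  have h0 : ∫ ω, (EuclideanSpace.proj (𝕜 := ℝ) i)
      (((S ω / π ω) * psi τ (Y ω - ⟪X ω, θ₀⟫)) • X ω) ∂P = 0 := by
    rw [← key i]
    exact integral_congr_ae (.of_forall fun ω => by simp [smul_eq_mul])
  rw [ContinuousLinearMap.integral_comp_comm _ hInt1] at h0
  simpa [EuclideanSpace.proj, PiLp.proj_apply] using h0
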